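/- Let i,j,k ∈ {1,...,n+1} be pairwise distinct. Then in 𝒟_{ℂ^n}[s_1,...,s_{n+1}]: l_k Ũ_{i,j} − l_j Ũ_{i,k} = l_i U_{i,j}(l_j) Ũ_{j,k}. -/

import Mathlib

open MvPolynomial

/-- The ring `ℂ[x₁,…,xₙ,s₁,…,s_{n+1}]`; `Sum.inl i` is `xᵢ`, `Sum.inr j` is `sⱼ`. -/
abbrev P2 (n : ℕ) := MvPolynomial (Fin n ⊕ Fin (n + 1)) ℂ

/-- The ring `𝒟_{ℂⁿ}[s₁,…,s_{n+1}]` of differential operators with polynomial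
coefficients is realized faithfully by its action on `ℂ[x,s]` :
multiplication by a polynomial. -/
noncomputable def M {n : ℕ} (q : P2 n) : Module.End ℂ (P2 n) := LinearMap.mulLeft ℂ q

/-- A linear form on `ℂⁿ` (with coefficient vector `c`) as a polynomial. -/
noncomputable def lfp {n : ℕ} (c : Fin n → ℂ) : P2 n := ∑ m, C (c m) * X (Sum.inl m)

/-- The variable `sⱼ` as a polynomial. -/
noncomputable def sp {n : ℕ} (j : Fin (n + 1)) : P2 n := X (Sum.inr j)

/-- The constant vector field `u` as a differential operator (a derivation in the
`x`-variables only). -/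
noncomputable def Dv {n : ℕ} (u : Fin n → ℂ) : Module.End ℂ (P2 n) :=
  (mkDerivation ℂ (fun v => Sum.casesOn v (fun m => (C (u m) : P2 n)) fun _ => 0) :
    Derivation ℂ (P2 n) (P2 n))

/-- The value `U(l)` of a constant vector field `u` on the linear form with
coefficient vector `c`. -/
noncomputable def ap {n : ℕ} (u c : Fin n → ℂ) : ℂ := ∑ m, u m * c m

/-- A family of linear forms is generic if every subfamily of `n` of them is
linearly independent. -/
def Generic {n p : ℕ} (l : Fin p → Fin n → ℂ) : Prop :=
  ∀ S : Finset (Fin p), S.card = n → LinearIndependent ℂ (fun i : S => l i.1)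

/-- The operator `Ũ_{i,j} = lᵢ lⱼ U_{i,j} − lⱼ sᵢ − U_{i,j}(lⱼ) lᵢ sⱼ`. -/
noncomputable def Ut {n : ℕ} (l : Fin (n + 1) → Fin n → ℂ)
    (u : Fin (n + 1) → Fin (n + 1) → Fin n → ℂ) (i j : Fin (n + 1)) :
    Module.End ℂ (P2 n) :=
  M (lfp (l i)) * M (lfp (l j)) * Dv (u i j) - M (lfp (l j)) * M (sp i) -
    ap (u i j) (l j) • (M (lfp (l i)) * M (sp j))

/-- The operator `Ẽ = E − s₁ − ⋯ − s_{n+1}`, `E` being the Euler vector field. -/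
noncomputable def Et (n : ℕ) : Module.End ℂ (P2 n) :=
  (∑ i : Fin n, M (X (Sum.inl i)) * Dv (Pi.single i 1)) - ∑ k : Fin (n + 1), M (sp k)

/-- The pairing `ap u` as a linear map in the second argument. -/
noncomputable def apL {n : ℕ} (u : Fin n → ℂ) : (Fin n → ℂ) →ₗ[ℂ] ℂ where
  toFun c := ap u c
  map_add' a b := by simp [ap, mul_add, Finset.sum_add_distrib]
  map_smul' r a := by simp [ap, Finset.mul_sum, mul_comm, mul_left_comm]

/-- A vector pairing to zero with all the generic forms `l m`, `m ≠ k`, is zero. -/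
lemma vec_zero {n : ℕ} (l : Fin (n + 1) → Fin n → ℂ) (hl : Generic l)
    (k : Fin (n + 1)) (v : Fin n → ℂ) (hv : ∀ m, m ≠ k → ap v (l m) = 0) :
    v = 0 := by
  set S : Finset (Fin (n + 1)) := {k}ᶜ with hS
  have hcard : S.card = n := by simp [hS, Finset.card_compl]
  have hli := hl S hcard
  have hspan : Submodule.span ℂ (Set.range fun i : S => l i.1) = ⊤ :=
    hli.span_eq_top_of_card_eq_finrank' (by
      simp [Fintype.card_coe, hcard])
  have hphi : apL v = 0 := by
    refine LinearMap.ext_on_range hspan fun m => ?_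
    have : (m : Fin (n + 1)) ≠ k := by
      have h2 := m.2
      simp only [hS, Finset.mem_compl, Finset.mem_singleton] at h2
      exact h2
    exact hv m this
  funext t
  have := congrFun (congrArg (fun f => f.toFun) hphi) (Pi.single t 1)
  simpa [apL, ap, Pi.single_apply, mul_comm] using this

lemma ap_add {n : ℕ} (a b c : Fin n → ℂ) : ap (a + b) c = ap a c + ap b c := by
  simp [ap, add_mul, Finset.sum_add_distrib]

lemma ap_sub {n : ℕ} (a b c : Fin n → ℂ) : ap (a - b) c = ap a c - ap b c := by
  simp [ap, sub_mul, Finset.sum_sub_distrib]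

lemma ap_smul {n : ℕ} (r : ℂ) (a c : Fin n → ℂ) : ap (r • a) c = r * ap a c := by
  simp [ap, Finset.mul_sum, mul_assoc]

lemma Dv_add_smul {n : ℕ} (a b : Fin n → ℂ) (r : ℂ) :
    Dv (a + r • b) = Dv a + r • Dv b := by
  set f : (Fin n → ℂ) → (Fin n ⊕ Fin (n + 1) → P2 n) :=
    fun w v => Sum.casesOn v (fun m => (C (w m) : P2 n)) fun _ => 0 with hfdef
  have hf : f (a + r • b) = f a + r • f b := by
    funext v
    cases v with
    | inl m => simp [hfdef, C_add, smul_eq_C_mul, C_mul]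
    | inr m => simp [hfdef]
  have h2 : (mkDerivation ℂ (f (a + r • b)) : Derivation ℂ (P2 n) (P2 n)) =
      mkDerivation ℂ (f a) + r • mkDerivation ℂ (f b) := by
    refine derivation_ext fun v => ?_
    rw [hf]
    simp [mkDerivation_X]
  show ((mkDerivation ℂ (f (a + r • b)) : Derivation ℂ (P2 n) (P2 n)) :
      Module.End ℂ (P2 n)) = _
  rw [h2]
  rfl

/-- for pairwise distinct `i,j,k`,
`l_k Ũ_{i,j} − l_j Ũ_{i,k} = l_i U_{i,j}(l_j) Ũ_{j,k}`. -/
theorem stmt10 (n : ℕ) (l : Fin (n + 1) → Fin n → ℂ) (hl : Generic l)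
    (u : Fin (n + 1) → Fin (n + 1) → Fin n → ℂ)
    (hu1 : ∀ a b, a ≠ b → ap (u a b) (l a) = 1)
    (hu0 : ∀ a b, a ≠ b → ∀ k, k ≠ a → k ≠ b → ap (u a b) (l k) = 0)
    (i j k : Fin (n + 1)) (hij : i ≠ j) (hik : i ≠ k) (hjk : j ≠ k) :
    M (lfp (l k)) * Ut l u i j - M (lfp (l j)) * Ut l u i k =
      ap (u i j) (l j) • (M (lfp (l i)) * Ut l u j k) := by
  set c := ap (u i j) (l j) with hc
  -- the key vector identity `u i j = u i k + c • u j k`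
  have hkey : u i j = u i k + c • u j k := by
    have hv : u i j - (u i k + c • u j k) = 0 := by
      apply vec_zero l hl k
      intro m hm
      rw [ap_sub, ap_add, ap_smul]
      by_cases hmi : m = i
      · rw [hmi, hu1 i j hij, hu1 i k hik, hu0 j k hjk i hij hik]
        ring
      · by_cases hmj : m = j
        · rw [hmj, hu0 i k hik j (Ne.symm hij) hjk, hu1 j k hjk, ← hc]
          ring
        · rw [hu0 i j hij m hmi hmj, hu0 i k hik m hmi hm,
            hu0 j k hjk m hmj hm]
          ring
    exact sub_eq_zero.mp hv
  -- scalar identity: ap (u i k) (l k) = -(c * ap (u j k) (l k))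
  have hsc : ap (u i k) (l k) = -(c * ap (u j k) (l k)) := by
    have h0 : ap (u i j) (l k) = 0 := hu0 i j hij k (Ne.symm hik) (Ne.symm hjk)
    rw [hkey, ap_add, ap_smul] at h0
    linear_combination h0
  -- operator identity for the derivations
  have hD : Dv (u i j) = Dv (u i k) + c • Dv (u j k) := by
    rw [hkey]; exact Dv_add_smul _ _ _
  -- now pure commutative algebra after evaluating on a polynomial
  refine LinearMap.ext fun p => ?_
  have hDp : Dv (u i j) p = Dv (u i k) p + C c * Dv (u j k) p := by
    rw [hD]
    simp [smul_eq_C_mul]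
  have hscC : (C (ap (u i k) (l k)) : P2 n) =
      -(C c * C (ap (u j k) (l k))) := by
    rw [hsc]; simp
  simp only [Ut, M, LinearMap.sub_apply, Module.End.mul_apply, LinearMap.smul_apply,
    LinearMap.mulLeft_apply, smul_eq_C_mul, ← hc]
  linear_combination (lfp (l k) * lfp (l i) * lfp (l j)) * hDp +
    (lfp (l i) * lfp (l j) * (sp k * p)) * hscC
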